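/- With λ ∈ Y_{h,w}, λ_1 = w, and λ^{(i)} defined as in the staircase construction, the transpose satisfies (λ^{(i)})^T = (α_1, α_2, …, α_{w−i}, α_{w−i+2} − 1, …, α_w − 1, 0), where α = λ^T; consequently ν_i := |λ| − |λ^{(i)}| = α_{w−i+1} + (i − 1). -/

import Mathlib

/-- `Yset h w`: Young diagrams with at most `h` rows of length at most `w`. -/
def Yset (h w : ℕ) : Set (ℕ → ℕ) :=
  {lam | (∀ i j : ℕ, i ≤ j → lam j ≤ lam i) ∧ (∀ i, lam i ≤ w) ∧ ∀ i, h ≤ i → lam i = 0}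

/-- Transpose of a diagram with at most `h` rows: `(λ^T)_i = #{j < h : λ_j ≥ i+1}` (0-based). -/
def transposeIn (h : ℕ) (lam : ℕ → ℕ) : ℕ → ℕ :=
  fun i => ((Finset.range h).filter (fun j => i + 1 ≤ lam j)).card

/-- The staircase truncation `λ^{(i)}` (0-based encoding). -/
def stair (h w i : ℕ) (lam : ℕ → ℕ) : ℕ → ℕ :=
  fun k =>
    if k + 1 < ((Finset.range h).filter (fun t => w - i < lam t)).card then lam (k + 1) - 1
    else if k + 1 = ((Finset.range h).filter (fun t => w - i < lam t)).card then w - i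
    else lam k

lemma dc_range (S : Finset ℕ) (hS : ∀ a ∈ S, ∀ b ≤ a, b ∈ S) : S = Finset.range S.card := by
  have h1 : Finset.range S.card ⊆ S := by
    intro b hb
    rw [Finset.mem_range] at hb
    by_contra hbS
    have hsub : S ⊆ Finset.range b := by
      intro a ha
      rw [Finset.mem_range]
      by_contra hab
      exact hbS (hS a ha b (by omega))
    have := Finset.card_le_card hsub
    rw [Finset.card_range] at this
    omega
  exact (Finset.eq_of_subset_of_card_le h1 (by simp)).symm

lemma lt_transpose_iff (h : ℕ) (lam : ℕ → ℕ) (hanti : ∀ i j : ℕ, i ≤ j → lam j ≤ lam i)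
    (k j : ℕ) : j < transposeIn h lam k ↔ (j < h ∧ k + 1 ≤ lam j) := by
  have hdc : ((Finset.range h).filter (fun t => k + 1 ≤ lam t))
      = Finset.range ((Finset.range h).filter (fun t => k + 1 ≤ lam t)).card := by
    apply dc_range
    intro a ha b hb
    simp only [Finset.mem_filter, Finset.mem_range] at ha ⊢
    exact ⟨by omega, le_trans ha.2 (hanti b a hb)⟩
  constructor
  · intro hj
    have : j ∈ Finset.range (transposeIn h lam k) := Finset.mem_range.2 hj
    rw [transposeIn, ← hdc] at this
    simpa using this
  · intro hj
    have : j ∈ (Finset.range h).filter (fun t => k + 1 ≤ lam t) := by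
      simp only [Finset.mem_filter, Finset.mem_range]; exact hj
    rw [hdc, Finset.mem_range] at this
    exact this

/-- For `λ ∈ Y_{h,w}` with `λ_1 = w` and `0 < i ≤ w`, writing `α = λ^T`, the transpose of the
staircase truncation is `(λ^{(i)})^T = (α_1, …, α_{w−i}, α_{w−i+2} − 1, …, α_w − 1, 0)`;
consequently `ν_i = |λ| − |λ^{(i)}| = α_{w−i+1} + (i − 1)`  (all indices 1-based in this
description, 0-based in the formal statement). -/
theorem stair_transpose (h w i : ℕ) (hh : 0 < h) (hw : 0 < w) (hi : 0 < i) (hiw : i ≤ w)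
    (lam : ℕ → ℕ) (hlam : lam ∈ Yset h w) (hl0 : lam 0 = w) :
    (∀ k, transposeIn h (stair h w i lam) k =
      if k < w - i then transposeIn h lam k
      else if k + 1 < w then transposeIn h lam (k + 1) - 1
      else 0) ∧
    (∑ k ∈ Finset.range h, lam k) - (∑ k ∈ Finset.range h, stair h w i lam k)
      = transposeIn h lam (w - i) + (i - 1) := by
  obtain ⟨hanti, hle, hvan⟩ := hlam
  set J := ((Finset.range h).filter (fun t => w - i < lam t)).card with hJdef
  have hJT : J = transposeIn h lam (w - i) := rfl
  have hJ : ∀ j, j < J ↔ (j < h ∧ w - i < lam j) := by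
    intro j
    rw [hJT]
    exact lt_transpose_iff h lam hanti (w - i) j
  have hJpos : 0 < J := (hJ 0).2 ⟨hh, by omega⟩
  have hJh : J ≤ h := by
    have := Finset.card_filter_le (Finset.range h) (fun t => w - i < lam t)
    simpa using this
  -- stair values
  have hst1 : ∀ k, k + 1 < J → stair h w i lam k = lam (k + 1) - 1 := by
    intro k hk; simp [stair, ← hJdef, hk]
  have hst2 : ∀ k, k + 1 = J → stair h w i lam k = w - i := by
    intro k hk; simp [stair, ← hJdef, hk]
  have hst3 : ∀ k, J ≤ k → stair h w i lam k = lam k := by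
    intro k hk
    have h1 : ¬ (k + 1 < J) := by omega
    have h2 : ¬ (k + 1 = J) := by omega
    simp [stair, ← hJdef, h1, h2]
  constructor
  · intro k
    by_cases hk1 : k < w - i
    · -- case A
      rw [if_pos hk1]
      unfold transposeIn
      congr 1
      apply Finset.filter_congr
      intro j hj
      rw [Finset.mem_range] at hj
      rcases lt_trichotomy (j + 1) J with hc | hc | hc
      · rw [hst1 j hc]
        have hj1 := (hJ (j + 1)).1 hc
        have hjj := (hJ j).1 (by omega)
        constructor <;> intro _ <;> omega
      · rw [hst2 j hc]
        have hjj := (hJ j).1 (by omega)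
        constructor <;> intro _ <;> omega
      · rw [hst3 j (by omega)]
    · rw [if_neg hk1]
      by_cases hk2 : k + 1 < w
      · -- case B
        rw [if_pos hk2]
        set L := transposeIn h lam (k + 1) with hLdef
        have hL : ∀ j, j < L ↔ (j < h ∧ k + 2 ≤ lam j) :=
          fun j => lt_transpose_iff h lam hanti (k + 1) j
        have hLpos : 0 < L := (hL 0).2 ⟨hh, by omega⟩
        have hLJ : L ≤ J := by
          by_contra hcon
          have h1 := (hL (L - 1)).1 (by omega)
          have h2 := (hJ (L - 1)).2 ⟨h1.1, by omega⟩
          omega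
        have hfe : (Finset.range h).filter (fun j => k + 1 ≤ stair h w i lam j)
            = Finset.range (L - 1) := by
          ext j
          simp only [Finset.mem_filter, Finset.mem_range]
          constructor
          · rintro ⟨hjh, hjs⟩
            rcases lt_trichotomy (j + 1) J with hc | hc | hc
            · rw [hst1 j hc] at hjs
              have hj1 := (hJ (j + 1)).1 hc
              have : j + 1 < L := (hL (j + 1)).2 ⟨hj1.1, by omega⟩
              omega
            · rw [hst2 j hc] at hjs; omega
            · rw [hst3 j (by omega)] at hjs
              have := (hJ j).2
              have hle' : ¬ (w - i < lam j) := fun hcc => by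
                have := (hJ j).2 ⟨hjh, hcc⟩; omega
              omega
          · intro hjL
            have hj1L : j + 1 < L := by omega
            have h1 := (hL (j + 1)).1 hj1L
            have hj1J : j + 1 < J := by omega
            refine ⟨by omega, ?_⟩
            rw [hst1 j hj1J]
            omega
        rw [transposeIn]
        rw [hfe, Finset.card_range]
      · -- case C
        rw [if_neg hk2]
        rw [transposeIn]
        convert Finset.card_empty
        rw [Finset.filter_eq_empty_iff]
        intro j hj
        rw [Finset.mem_range] at hj
        rcases lt_trichotomy (j + 1) J with hc | hc | hc
        · rw [hst1 j hc]
          have := hle (j + 1)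
          omega
        · rw [hst2 j hc]; omega
        · rw [hst3 j (by omega)]
          have hle' : ¬ (w - i < lam j) := fun hcc => by
            have := (hJ j).2 ⟨hj, hcc⟩; omega
          omega
  · -- sum identity
    have key : (∑ k ∈ Finset.range h, stair h w i lam k) + (J - 1) + i
        = ∑ k ∈ Finset.range h, lam k := by
      have hsplit : ∑ k ∈ Finset.range h, stair h w i lam k
          = (∑ k ∈ Finset.range J, stair h w i lam k)
            + ∑ k ∈ Finset.Ico J h, stair h w i lam k := by
        exact (Finset.sum_range_add_sum_Ico _ hJh).symm
      have htail : ∑ k ∈ Finset.Ico J h, stair h w i lam k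
          = ∑ k ∈ Finset.Ico J h, lam k := by
        apply Finset.sum_congr rfl
        intro k hk
        rw [Finset.mem_Ico] at hk
        exact hst3 k hk.1
      have hhead : ∑ k ∈ Finset.range J, stair h w i lam k
          = (∑ k ∈ Finset.range (J - 1), (lam (k + 1) - 1)) + (w - i) := by
        have hJ1 : J = (J - 1) + 1 := by omega
        rw [hJ1, Finset.sum_range_succ]
        congr 1
        · apply Finset.sum_congr rfl
          intro k hk
          rw [Finset.mem_range] at hk
          exact hst1 k (by omega)
        · exact hst2 (J - 1) (by omega)
      have hshift : ∑ k ∈ Finset.range (J - 1), lam (k + 1)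
          = (∑ k ∈ Finset.range (J - 1), (lam (k + 1) - 1)) + (J - 1) := by
        have h2 : (∑ k ∈ Finset.range (J - 1), ((lam (k + 1) - 1) + 1))
            = (∑ k ∈ Finset.range (J - 1), (lam (k + 1) - 1)) + (J - 1) := by
          rw [Finset.sum_add_distrib]
          simp
        rw [← h2]
        apply Finset.sum_congr rfl
        intro k hk
        rw [Finset.mem_range] at hk
        have := (hJ (k + 1)).1 (by omega)
        omega
      have hIco1 : ∑ k ∈ Finset.Ico 1 J, lam k
          = ∑ k ∈ Finset.range (J - 1), lam (k + 1) := by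
        rw [Finset.sum_Ico_eq_sum_range]
        apply Finset.sum_congr rfl
        intro k _
        congr 1
        omega
      have hlam_split : ∑ k ∈ Finset.range h, lam k
          = lam 0 + ((∑ k ∈ Finset.Ico 1 J, lam k) + ∑ k ∈ Finset.Ico J h, lam k) := by
        rw [Finset.sum_Ico_consecutive _ (by omega : (1:ℕ) ≤ J) hJh]
        rw [Finset.range_eq_Ico, ← Finset.sum_Ico_consecutive _ (Nat.zero_le 1) (by omega : 1 ≤ h)]
        simp
      rw [hsplit, htail, hhead, hlam_split, hl0, hIco1, hshift]
      omega
    rw [← hJT]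
    omega
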